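/- Let n be a prime number and let U, V be the Weyl pair in dimension n. Consider the n + 1 unitary matrices A_0 = U and A_{m+1} = U^m · V for m = 0, …, n−1. For any two distinct indices i ≠ j in {0, …, n}, if a is a unit eigenvector of A_i and b is a unit eigenvector of A_j, then |⟨a, b⟩|² = 1/n; that is, orthonormal eigenbases of any two distinct matrices from this family are mutually unbiased. -/

import Mathlib

open Matrix

/-- The primitive `n`-th root of unity `ζ = exp(2πi/n)`. -/
noncomputable def zeta (n : ℕ) : ℂ := Complex.exp (2 * Real.pi * Complex.I / n)

/-- The cyclic shift matrix `U` of the Weyl pair: `U i j = 1` iff `j ≡ i + 1 (mod n)`. -/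
def weylU (n : ℕ) : Matrix (Fin n) (Fin n) ℂ :=
  Matrix.of fun i j => if ((i : ℕ) + 1) % n = (j : ℕ) then 1 else 0

/-- The diagonal matrix `V` of the Weyl pair: `V k k = ζ^k`. -/
noncomputable def weylV (n : ℕ) : Matrix (Fin n) (Fin n) ℂ :=
  Matrix.diagonal fun k => zeta n ^ (k : ℕ)


open Finset
open Fin.NatCast

section basic
variable {n : ℕ}

lemma zeta_prim (hn : n ≠ 0) : IsPrimitiveRoot (zeta n) n := Complex.isPrimitiveRoot_exp n hn

lemma zeta_pow_n (hn : n ≠ 0) : zeta n ^ n = 1 := (zeta_prim hn).pow_eq_one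

lemma zeta_pow_mod (hn : n ≠ 0) (a : ℕ) : zeta n ^ a = zeta n ^ (a % n) := by
  conv_lhs => rw [← Nat.div_add_mod a n]
  rw [pow_add, pow_mul, zeta_pow_n hn, one_pow, one_mul]

lemma zeta_pow_modeq (hn : n ≠ 0) {a b : ℕ} (h : a ≡ b [MOD n]) :
    zeta n ^ a = zeta n ^ b := by
  rw [zeta_pow_mod hn a, zeta_pow_mod hn b, h]

lemma zeta_pow_eq_one_iff (hn : n ≠ 0) {s : ℕ} : zeta n ^ s = 1 ↔ n ∣ s :=
  (zeta_prim hn).pow_eq_one_iff_dvd s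

lemma sum_zeta_pow (hn : n ≠ 0) {s : ℕ} (hs : ¬ n ∣ s) :
    (∑ t : Fin n, zeta n ^ (s * (t : ℕ))) = 0 := by
  have hz : zeta n ^ s ≠ 1 := fun h => hs ((zeta_pow_eq_one_iff hn).1 h)
  have : (∑ t : Fin n, zeta n ^ (s * (t : ℕ))) = ∑ t ∈ range n, (zeta n ^ s) ^ t := by
    rw [Finset.sum_range fun t => (zeta n ^ s) ^ t]
    exact Finset.sum_congr rfl fun t _ => by rw [← pow_mul]
  rw [this, geom_sum_eq hz, ← pow_mul, mul_comm s n, pow_mul, zeta_pow_n hn, one_pow,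
    sub_self, zero_div]

lemma conj_zeta_mul_self : (starRingEnd ℂ) (zeta n) * zeta n = 1 := by
  have : (starRingEnd ℂ) (zeta n) = Complex.exp (-(2 * Real.pi * Complex.I / n)) := by
    rw [zeta, ← Complex.exp_conj]
    congr 1
    simp only [map_div₀, _root_.map_mul, Complex.conj_I, Complex.conj_ofReal, map_ofNat,
      map_natCast]
    ring
  rw [this, zeta, ← Complex.exp_add, neg_add_cancel, Complex.exp_zero]

lemma conj_zeta_pow_mul_self (k : ℕ) :
    (starRingEnd ℂ) (zeta n ^ k) * zeta n ^ k = 1 := by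
  rw [map_pow, ← mul_pow, conj_zeta_mul_self, one_pow]

end basic

set_option linter.unusedSectionVars false

section matrices
variable {n : ℕ} [NeZero n]

lemma key_cond (t j : Fin n) : (((t : ℕ) + 1) % n = (j : ℕ)) ↔ j = t + 1 := by
  rw [Fin.ext_iff, Fin.val_add, Fin.val_one']
  have h1 : ((t:ℕ) + 1) % n = ((t:ℕ) + 1 % n) % n := by
    conv_lhs => rw [Nat.add_mod, Nat.mod_eq_of_lt t.isLt]
  rw [h1]; exact eq_comm

lemma weylU_pow (k : ℕ) :
    weylU n ^ k = Matrix.of fun i j => if j = i + (k : Fin n) then 1 else 0 := by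
  induction k with
  | zero =>
    ext i j
    simp [Matrix.one_apply, eq_comm]
  | succ k ih =>
    ext i j
    rw [pow_succ, Matrix.mul_apply]
    rw [ih]
    simp only [weylU, Matrix.of_apply, key_cond]
    simp only [ite_mul, one_mul, zero_mul]
    rw [Finset.sum_ite_eq' Finset.univ (i + (k : Fin n)) (fun t => if j = t + 1 then (1:ℂ) else 0)]
    simp only [Finset.mem_univ, if_true]
    have hc : ((k + 1 : ℕ) : Fin n) = (k : Fin n) + 1 := by push_cast; ring
    rw [hc, ← add_assoc]

lemma weylU_pow_n : weylU n ^ n = (1 : Matrix (Fin n) (Fin n) ℂ) := by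
  ext i j
  rw [weylU_pow n]
  simp [Matrix.one_apply, eq_comm]

lemma weylV_pow (s : ℕ) :
    weylV n ^ s = Matrix.diagonal (fun k : Fin n => zeta n ^ (s * (k : ℕ))) := by
  have h : (fun k : Fin n => zeta n ^ (k:ℕ)) ^ s = fun k : Fin n => zeta n ^ (s * (k:ℕ)) := by
    funext k; rw [Pi.pow_apply, ← pow_mul, mul_comm]
  rw [weylV, Matrix.diagonal_pow, h]

/-- Generic Weyl operator `U^p V^q`. -/
noncomputable def weylW (n p q : ℕ) : Matrix (Fin n) (Fin n) ℂ :=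
  weylU n ^ p * weylV n ^ q

lemma weylW_apply (p q : ℕ) (i j : Fin n) :
    weylW n p q i j = if j = i + (p : Fin n) then zeta n ^ (q * (j : ℕ)) else 0 := by
  rw [weylW, weylV_pow, Matrix.mul_diagonal, weylU_pow]
  simp only [Matrix.of_apply, ite_mul, one_mul, zero_mul]

lemma weylW_zero_zero : weylW n 0 0 = 1 := by
  rw [weylW, pow_zero, pow_zero, one_mul]

lemma trace_weylW (p q : ℕ) (h : ¬ n ∣ p ∨ ¬ n ∣ q) :
    Matrix.trace (weylW n p q) = 0 := by
  have hn : n ≠ 0 := NeZero.ne n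
  rw [Matrix.trace]
  simp only [Matrix.diag_apply, weylW_apply]
  by_cases hp : n ∣ p
  · have hq : ¬ n ∣ q := h.resolve_left (not_not_intro hp)
    have hp0 : (p : Fin n) = 0 := Fin.natCast_eq_zero.mpr hp
    simp only [hp0, add_zero, if_pos rfl]
    exact sum_zeta_pow hn hq
  · have : ∀ i : Fin n, ¬ (i = i + (p : Fin n)) := fun i hi =>
      hp (Fin.natCast_eq_zero.mp (left_eq_add.mp hi))
    simp [this]

end matrices

section matrices2
variable {n : ℕ} [NeZero n]

lemma weylV_pow_mul_weylU_pow (p q : ℕ) :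
    weylV n ^ q * weylU n ^ p = zeta n ^ ((n-1)*p*q) • weylW n p q := by
  have hn : n ≠ 0 := NeZero.ne n
  ext i j
  rw [weylV_pow, Matrix.diagonal_mul, weylU_pow, Matrix.smul_apply, weylW_apply]
  simp only [Matrix.of_apply, mul_ite, mul_one, mul_zero]
  split_ifs with h
  · rw [smul_eq_mul, ← pow_add]
    apply zeta_pow_modeq hn
    have hmod : (j:ℕ) ≡ (i:ℕ) + p [MOD n] := by
      show (j:ℕ) % n = ((i:ℕ) + p) % n
      rw [h, Fin.val_add, Fin.val_natCast, Nat.mod_mod_of_dvd _ dvd_rfl]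
      conv_rhs => rw [Nat.add_mod, Nat.mod_eq_of_lt i.isLt]
    have h4 : (n-1)*p*q + q*((i:ℕ)+p) = q*(i:ℕ) + n*(p*q) := by
      rcases Nat.exists_eq_succ_of_ne_zero hn with ⟨m, hm⟩
      subst hm
      simp only [Nat.succ_sub_one, Nat.succ_eq_add_one]
      ring
    have m1 : (n-1)*p*q + q*(j:ℕ) ≡ q*(i:ℕ) + n*(p*q) [MOD n] := by
      rw [← h4]; exact (Nat.ModEq.refl _).add (hmod.mul_left q)
    have m2 : q*(i:ℕ) + n*(p*q) ≡ q*(i:ℕ) [MOD n] := by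
      conv_rhs => rw [← add_zero (q*(i:ℕ))]
      exact (Nat.ModEq.refl _).add ((Nat.modEq_zero_iff_dvd).2 (dvd_mul_right n _))
    exact (m1.trans m2).symm
  · rw [smul_zero]

lemma weylW_mul (p q p' q' : ℕ) :
    weylW n p q * weylW n p' q'
      = zeta n ^ ((n-1)*p'*q) • weylW n (p+p') (q+q') := by
  unfold weylW
  rw [mul_assoc (weylU n ^ p), ← mul_assoc (weylV n ^ q), weylV_pow_mul_weylU_pow,
    Matrix.smul_mul, Matrix.mul_smul]
  congr 1
  unfold weylW
  rw [pow_add, pow_add]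
  simp only [mul_assoc]

lemma weylU_pow_eq_W (k : ℕ) : weylU n ^ k = weylW n k 0 := by
  rw [weylW, pow_zero, mul_one]

lemma weylW_pow (p k : ℕ) :
    ∃ z : ℂ, weylW n p 1 ^ k = z • weylW n (p*k) k := by
  induction k with
  | zero =>
    exact ⟨1, by rw [pow_zero, Nat.mul_zero, weylW_zero_zero, one_smul]⟩
  | succ k ih =>
    obtain ⟨z, hz⟩ := ih
    refine ⟨z * zeta n ^ ((n-1)*p*k), ?_⟩
    rw [pow_succ, hz, Matrix.smul_mul, weylW_mul, smul_smul]
    rw [Nat.mul_succ]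

lemma trace_matrix_one : Matrix.trace (1 : Matrix (Fin n) (Fin n) ℂ) = n := by
  rw [Matrix.trace_one]
  simp

lemma fin_shift_cond (s t : Fin n) : (s = t + 1) ↔ (t = s - 1) := by
  constructor <;> intro h <;> simp [h]

lemma weylU_unitary : weylU n ∈ unitary (Matrix (Fin n) (Fin n) ℂ) := by
  have h : (weylU n)ᴴ * weylU n = 1 := by
    ext i j
    rw [Matrix.mul_apply, Matrix.one_apply]
    simp only [Matrix.conjTranspose_apply, weylU, Matrix.of_apply, key_cond,
      apply_ite (star : ℂ → ℂ), star_one, star_zero, ite_mul, one_mul, zero_mul,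
      fin_shift_cond]
    rw [Finset.sum_ite_eq' Finset.univ (i - 1) (fun t => if t = j - 1 then (1:ℂ) else 0)]
    simp only [Finset.mem_univ, if_true]
    by_cases hij : i = j
    · simp [hij]
    · have : ¬ (i - 1 = j - 1) := fun hc => hij (by
        have := congrArg (· + 1) hc
        simpa using this)
      simp [this, hij]
  exact ⟨h, mul_eq_one_comm.mp h⟩

lemma weylV_unitary : weylV n ∈ unitary (Matrix (Fin n) (Fin n) ℂ) := by
  have h : (weylV n)ᴴ * weylV n = 1 := by
    ext i j
    rw [weylV, Matrix.diagonal_conjTranspose, Matrix.diagonal_mul_diagonal,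
      Matrix.diagonal_apply, Matrix.one_apply]
    by_cases hij : i = j
    · have := conj_zeta_pow_mul_self (n := n) (j : ℕ)
      rw [map_pow] at this
      simp [hij, Complex.star_def, this]
    · simp [hij]
  exact ⟨h, mul_eq_one_comm.mp h⟩

end matrices2

section proj
variable {n : ℕ} [NeZero n]

def finZModEquiv (n : ℕ) [NeZero n] : Fin n ≃ ZMod n :=
  { toFun := fun i => ((i : ℕ) : ZMod n)
    invFun := fun x => ⟨x.val, x.val_lt⟩
    left_inv := fun i => Fin.ext (by simpa using ZMod.val_cast_of_lt i.isLt)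
    right_inv := fun x => ZMod.natCast_rightInverse x }

@[simp] lemma finZModEquiv_apply (i : Fin n) : finZModEquiv n i = ((i : ℕ) : ZMod n) := rfl

lemma my_sum_mulVec {ι : Type*} (s : Finset ι) (f : ι → Matrix (Fin n) (Fin n) ℂ)
    (v : Fin n → ℂ) : (∑ i ∈ s, f i).mulVec v = ∑ i ∈ s, (f i).mulVec v := by
  ext x
  simp only [Matrix.mulVec, dotProduct, Finset.sum_apply, Matrix.sum_apply,
    Finset.sum_mul]
  exact Finset.sum_comm

lemma eig_pow (M : Matrix (Fin n) (Fin n) ℂ) (a : Fin n → ℂ) (c : ℂ)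
    (ha : M.mulVec a = c • a) (k : ℕ) : (M ^ k).mulVec a = c ^ k • a := by
  induction k with
  | zero => simp
  | succ k ih =>
    rw [pow_succ, ← Matrix.mulVec_mulVec, ha, Matrix.mulVec_smul, ih, pow_succ]
    rw [smul_smul, mul_comm]

lemma eig_unimodular (M : Matrix (Fin n) (Fin n) ℂ)
    (hM : M ∈ unitary (Matrix (Fin n) (Fin n) ℂ))
    (a : Fin n → ℂ) (c : ℂ) (ha : M.mulVec a = c • a)
    (hna : (∑ x, (starRingEnd ℂ) (a x) * a x) = 1) :
    (starRingEnd ℂ) c * c = 1 := by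
  have hna' : dotProduct (star a) a = 1 := by
    simpa [dotProduct, Complex.star_def] using hna
  have h1 : dotProduct (star (M.mulVec a)) (M.mulVec a) = 1 := by
    rw [Matrix.star_mulVec, Matrix.dotProduct_mulVec, Matrix.vecMul_vecMul]
    have hMM : Mᴴ * M = 1 := by
      have := hM.1
      rwa [Matrix.star_eq_conjTranspose] at this
    rw [hMM, Matrix.vecMul_one, hna']
  rw [ha] at h1
  rw [star_smul, smul_dotProduct, dotProduct_smul, hna'] at h1
  simpa [Complex.star_def, smul_eq_mul] using h1

lemma vec_ne_zero (a : Fin n → ℂ)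
    (hna : (∑ x, (starRingEnd ℂ) (a x) * a x) = 1) : ∃ x, a x ≠ 0 := by
  by_contra h
  push_neg at h
  simp [h] at hna

lemma eig_scalar_pow (M : Matrix (Fin n) (Fin n) ℂ) (a : Fin n → ℂ) (c : ℂ)
    (ha : M.mulVec a = c • a)
    (hna : (∑ x, (starRingEnd ℂ) (a x) * a x) = 1)
    (hMn : ∃ z : ℂ, M ^ n = z • 1) : M ^ n = c ^ n • 1 := by
  obtain ⟨z, hz⟩ := hMn
  have h1 : (M ^ n).mulVec a = c ^ n • a := eig_pow M a c ha n
  rw [hz, Matrix.smul_mulVec, Matrix.one_mulVec] at h1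
  obtain ⟨x, hx⟩ := vec_ne_zero a hna
  have : z * a x = c ^ n * a x := congrFun h1 x
  have hzc : z = c ^ n := mul_right_cancel₀ hx this
  rw [hz, hzc]

lemma proj_formula (M : Matrix (Fin n) (Fin n) ℂ)
    (hM : M ∈ unitary (Matrix (Fin n) (Fin n) ℂ))
    (htr : ∀ k : ℕ, 0 < k → k < n → Matrix.trace (M ^ k) = 0)
    (hMn : ∃ z : ℂ, M ^ n = z • 1)
    (a : Fin n → ℂ) (c : ℂ) (ha : M.mulVec a = c • a)
    (hna : (∑ x, (starRingEnd ℂ) (a x) * a x) = 1) :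
    ((n : ℂ)⁻¹ • ∑ k ∈ Finset.range n, ((starRingEnd ℂ) c) ^ k • M ^ k)
      = Matrix.vecMulVec a (star a) := by
  have hn : n ≠ 0 := NeZero.ne n
  have hnC : (n : ℂ) ≠ 0 := Nat.cast_ne_zero.mpr hn
  set c' := (starRingEnd ℂ) c with hc'
  have hcc : c' * c = 1 := eig_unimodular M hM a c ha hna
  have hcc' : c * c' = 1 := by rw [mul_comm]; exact hcc
  have hMn' : M ^ n = c ^ n • 1 := eig_scalar_pow M a c ha hna hMn
  set g : ZMod n → Matrix (Fin n) (Fin n) ℂ := fun x => c' ^ x.val • M ^ x.val with hg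
  -- periodicity
  have hscal : ∀ q r : ℕ, c' ^ (n*q + r) * c ^ (n*q) = c' ^ r := by
    intro q r
    rw [pow_add, mul_comm (c'^(n*q)) _, mul_assoc, ← mul_pow, mul_comm c' c, hcc',
      one_pow, mul_one]
  have period : ∀ v : ℕ, c' ^ v • M ^ v = c' ^ (v % n) • M ^ (v % n) := by
    intro v
    conv_lhs => rw [← Nat.div_add_mod v n]
    rw [pow_add M, pow_mul, hMn', smul_pow, one_pow, smul_mul_assoc, one_mul,
      smul_smul, ← pow_mul c n (v/n), hscal]
  -- bridge
  have bridge : (∑ k ∈ Finset.range n, c' ^ k • M ^ k) = ∑ x : ZMod n, g x := by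
    rw [← Fin.sum_univ_eq_sum_range (fun k => c' ^ k • M ^ k) n]
    apply Fintype.sum_equiv (finZModEquiv n)
    intro i
    simp only [finZModEquiv_apply, hg]
    rw [ZMod.val_cast_of_lt i.isLt]
  have gadd : ∀ x y : ZMod n, g x * g y = g (x + y) := by
    intro x y
    simp only [hg]
    rw [smul_mul_assoc, Matrix.mul_smul, ← pow_add, smul_smul, ← pow_add,
      ZMod.val_add, ← period]
  have g0 : g 0 = 1 := by simp [hg, ZMod.val_zero]
  set S := ((n : ℂ)⁻¹ • ∑ x : ZMod n, g x) with hS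
  rw [bridge, ← hS]
  -- S * S = S
  have sum_shift : ∀ x : ZMod n, (∑ y : ZMod n, g (x + y)) = ∑ y : ZMod n, g y := by
    intro x
    exact Equiv.sum_comp (Equiv.addLeft x) g
  have hSS : S * S = S := by
    rw [hS, Matrix.smul_mul, Matrix.mul_smul, smul_smul, Finset.sum_mul_sum]
    have : (∑ x : ZMod n, ∑ y : ZMod n, g x * g y) = (n : ℂ) • ∑ x : ZMod n, g x := by
      have e1 : ∀ x : ZMod n, (∑ y : ZMod n, g x * g y) = ∑ y : ZMod n, g y := by
        intro x
        rw [Finset.sum_congr rfl fun y _ => gadd x y]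
        exact sum_shift x
      rw [Finset.sum_congr rfl fun x _ => e1 x, Finset.sum_const, Finset.card_univ,
        ZMod.card]
      rw [← Nat.cast_smul_eq_nsmul ℂ]
    rw [this, smul_smul]
    congr 1
    field_simp
  -- S a = a
  have hSa : S.mulVec a = a := by
    rw [hS, Matrix.smul_mulVec, my_sum_mulVec]
    have e1 : ∀ x : ZMod n, (g x).mulVec a = a := by
      intro x
      simp only [hg]
      rw [Matrix.smul_mulVec, eig_pow M a c ha, smul_smul, ← mul_pow, hcc,
        one_pow, one_smul]
    rw [Finset.sum_congr rfl fun x _ => e1 x, Finset.sum_const, Finset.card_univ,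
      ZMod.card, ← Nat.cast_smul_eq_nsmul ℂ, smul_smul]
    rw [inv_mul_cancel₀ hnC, one_smul]
  -- S hermitian
  have gstar : ∀ x : ZMod n, (g x)ᴴ = g (-x) := by
    intro x
    have hinv : g x * g (-x) = 1 := by rw [gadd, add_neg_cancel, g0]
    have hstar : (g x)ᴴ * g x = 1 := by
      simp only [hg]
      rw [Matrix.conjTranspose_smul, smul_mul_assoc, Matrix.mul_smul, smul_smul]
      have h1 : star (c' ^ x.val) = c ^ x.val := by
        rw [star_pow]; congr 1
        simp [hc', Complex.star_def]
      rw [h1, ← mul_pow, hcc', one_pow, one_smul]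
      have := (Unitary.mem_iff.mp (pow_mem hM x.val)).1
      rwa [Matrix.star_eq_conjTranspose] at this
    calc (g x)ᴴ = (g x)ᴴ * (g x * g (-x)) := by rw [hinv, mul_one]
    _ = ((g x)ᴴ * g x) * g (-x) := by rw [mul_assoc]
    _ = g (-x) := by rw [hstar, one_mul]
  have hSstar : Sᴴ = S := by
    rw [hS, Matrix.conjTranspose_smul, Matrix.conjTranspose_sum]
    rw [Finset.sum_congr rfl fun x _ => gstar x]
    rw [show (∑ x : ZMod n, g (-x)) = ∑ x : ZMod n, g x from
      Fintype.sum_equiv (Equiv.neg (ZMod n)) _ g (fun x => rfl)]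
    congr 1
    simp [Complex.star_def, map_inv₀]
  -- trace S = 1
  have htrS : Matrix.trace S = 1 := by
    rw [hS, Matrix.trace_smul, Matrix.trace_sum]
    have e1 : ∀ x : ZMod n, Matrix.trace (g x) = if x = 0 then (n : ℂ) else 0 := by
      intro x
      by_cases hx : x = 0
      · rw [hx, g0, if_pos rfl, trace_matrix_one]
      · rw [if_neg hx]
        simp only [hg]
        rw [Matrix.trace_smul, htr x.val (Nat.pos_of_ne_zero fun h =>
          hx ((ZMod.val_eq_zero x).mp h)) x.val_lt, smul_zero]
    rw [Finset.sum_congr rfl fun x _ => e1 x, Finset.sum_ite_eq' Finset.univ 0 fun _ => (n:ℂ)]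
    simp [inv_mul_cancel₀ hnC]
  -- now the projection Q
  set Q := Matrix.vecMulVec a (star a) with hQdef
  have hna' : (∑ x, star (a x) * a x) = 1 := by
    simpa [Complex.star_def] using hna
  have hQQ : Q * Q = Q := by
    ext i j
    rw [Matrix.mul_apply]
    simp only [hQdef, Matrix.vecMulVec_apply, Pi.star_apply]
    have e : ∀ t, (a i * star (a t)) * (a t * star (a j))
        = (a i * star (a j)) * (star (a t) * a t) := fun t => by ring
    rw [Finset.sum_congr rfl fun t _ => e t, ← Finset.mul_sum, hna', mul_one]
  have hrow : ∀ i, (∑ t, S i t * a t) = a i := by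
    intro i
    have := congrFun hSa i
    simpa [Matrix.mulVec, dotProduct] using this
  have hSQ : S * Q = Q := by
    ext i j
    rw [Matrix.mul_apply]
    simp only [hQdef, Matrix.vecMulVec_apply, Pi.star_apply]
    have e : ∀ t, S i t * (a t * star (a j)) = (S i t * a t) * star (a j) := fun t => by ring
    rw [Finset.sum_congr rfl fun t _ => e t, ← Finset.sum_mul, hrow]
  have hQstar : Qᴴ = Q := by
    ext i j
    simp only [hQdef, Matrix.conjTranspose_apply, Matrix.vecMulVec_apply, Pi.star_apply,
      StarMul.star_mul, star_star]
  have hQS : Q * S = Q := by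
    have h1 : Q * S = (Sᴴ * Qᴴ)ᴴ := by
      rw [Matrix.conjTranspose_mul, Matrix.conjTranspose_conjTranspose,
        Matrix.conjTranspose_conjTranspose]
    rw [h1, hSstar, hQstar, hSQ, hQstar]
  have htrQ : Matrix.trace Q = 1 := by
    rw [Matrix.trace]
    simp only [Matrix.diag_apply, hQdef, Matrix.vecMulVec_apply, Pi.star_apply]
    rw [← hna']
    exact Finset.sum_congr rfl fun x _ => mul_comm _ _
  -- difference is 0
  have hMM : (S - Q) * (S - Q) = S - Q := by
    rw [sub_mul, mul_sub, mul_sub, hSS, hSQ, hQS, hQQ]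
    simp
  have hMstar : (S - Q)ᴴ = S - Q := by
    rw [Matrix.conjTranspose_sub, hSstar, hQstar]
  have htrM : Matrix.trace (S - Q) = 0 := by
    rw [Matrix.trace_sub, htrS, htrQ, sub_self]
  have hzero : S - Q = 0 := by
    have h1 : (∑ i, ∑ t, (S - Q) i t * star ((S - Q) i t)) = 0 := by
      have h2 : Matrix.trace ((S - Q) * (S - Q)) = 0 := by rw [hMM, htrM]
      rw [Matrix.trace] at h2
      simp only [Matrix.diag_apply, Matrix.mul_apply] at h2
      rw [← h2]
      apply Finset.sum_congr rfl
      intro i _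
      apply Finset.sum_congr rfl
      intro t _
      congr 1
      have := congrFun (congrFun hMstar t) i
      rw [Matrix.conjTranspose_apply] at this
      rw [← this]
    have h3 : (∑ i, ∑ t, (Complex.normSq ((S - Q) i t) : ℂ)) = 0 := by
      rw [← h1]
      exact Finset.sum_congr rfl fun i _ => Finset.sum_congr rfl fun t _ =>
        (Complex.mul_conj _).symm
    have h4 : (∑ i, ∑ t, Complex.normSq ((S - Q) i t)) = 0 := by
      have := h3
      push_cast at this
      exact_mod_cast this
    ext i j
    have h5 : ∀ i ∈ Finset.univ (α := Fin n),
        (∑ t, Complex.normSq ((S - Q) i t)) = 0 := by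
      intro i _
      have hnn : ∀ i ∈ Finset.univ (α := Fin n), 0 ≤ ∑ t, Complex.normSq ((S - Q) i t) :=
        fun i _ => Finset.sum_nonneg fun t _ => Complex.normSq_nonneg _
      exact (Finset.sum_eq_zero_iff_of_nonneg hnn).mp h4 i (Finset.mem_univ i)
    have h6 := (Finset.sum_eq_zero_iff_of_nonneg
      (fun t _ => Complex.normSq_nonneg ((S - Q) i t))).mp (h5 i (Finset.mem_univ i))
      j (Finset.mem_univ j)
    simpa using Complex.normSq_eq_zero.mp h6
  have := sub_eq_zero.mp hzero
  rw [hS] at this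
  exact this

end proj

section main
variable {n : ℕ} [NeZero n]

lemma weylW_eq_one {p q : ℕ} (hp : n ∣ p) (hq : n ∣ q) : weylW n p q = 1 := by
  obtain ⟨s, rfl⟩ := hp
  obtain ⟨t, rfl⟩ := hq
  rw [weylW, pow_mul, weylU_pow_n, one_pow, one_mul, pow_mul]
  have : weylV n ^ n = 1 := by
    rw [weylV_pow]
    have : (fun k : Fin n => zeta n ^ (n * (k:ℕ))) = fun _ : Fin n => (1:ℂ) := by
      funext k
      exact (zeta_pow_eq_one_iff (NeZero.ne n)).mpr (dvd_mul_right n _)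
    rw [this, Matrix.diagonal_one]
  rw [this, one_pow]

/-- classification of the powers of the family members -/
lemma family_pow (A : Fin (n + 1) → Matrix (Fin n) (Fin n) ℂ)
    (hA0 : A 0 = weylU n)
    (hAm : ∀ m : Fin n, A m.succ = weylU n ^ (m : ℕ) * weylV n)
    (idx : Fin (n + 1)) :
    ∃ P Q : ℕ,
      (∀ k : ℕ, ∃ z : ℂ, (A idx) ^ k = z • weylW n (P*k) (Q*k)) ∧
      (A idx ∈ unitary (Matrix (Fin n) (Fin n) ℂ)) ∧
      ((idx = 0 ∧ P = 1 ∧ Q = 0) ∨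
        (∃ m : Fin n, idx = m.succ ∧ P = (m:ℕ) ∧ Q = 1)) := by
  rcases Fin.eq_zero_or_eq_succ idx with h0 | ⟨m, hm⟩
  · refine ⟨1, 0, ?_, ?_, Or.inl ⟨h0, rfl, rfl⟩⟩
    · intro k
      refine ⟨1, ?_⟩
      rw [h0, hA0, one_smul, one_mul, Nat.zero_mul, weylU_pow_eq_W]
    · rw [h0, hA0]; exact weylU_unitary
  · refine ⟨(m:ℕ), 1, ?_, ?_, Or.inr ⟨m, hm, rfl, rfl⟩⟩
    · intro k
      have h1 : A idx = weylW n (m:ℕ) 1 := by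
        rw [hm, hAm m, weylW, pow_one]
      rw [h1, one_mul]
      exact weylW_pow (m:ℕ) k
    · rw [hm, hAm m]
      exact mul_mem (pow_mem weylU_unitary _) weylV_unitary

lemma family_trace_pow_eq_zero (A : Fin (n + 1) → Matrix (Fin n) (Fin n) ℂ)
    (hA0 : A 0 = weylU n)
    (hAm : ∀ m : Fin n, A m.succ = weylU n ^ (m : ℕ) * weylV n)
    (idx : Fin (n + 1)) (k : ℕ) (h0 : 0 < k) (hk : k < n) :
    Matrix.trace ((A idx) ^ k) = 0 := by
  obtain ⟨P, Q, hpow, -, hclass⟩ := family_pow A hA0 hAm idx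
  obtain ⟨z, hz⟩ := hpow k
  have hndvd : ¬ n ∣ k := Nat.not_dvd_of_pos_of_lt h0 hk
  rw [hz, Matrix.trace_smul, smul_eq_mul]
  rcases hclass with ⟨-, hP, hQ⟩ | ⟨m, -, hP, hQ⟩
  · rw [hP, hQ, trace_weylW _ _ (Or.inl (by rwa [one_mul])), mul_zero]
  · rw [hQ, trace_weylW _ _ (Or.inr (by rwa [one_mul])), mul_zero]

/-- the key vanishing of cross traces -/
lemma family_cross_trace (hn : n.Prime) (A : Fin (n + 1) → Matrix (Fin n) (Fin n) ℂ)
    (hA0 : A 0 = weylU n)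
    (hAm : ∀ m : Fin n, A m.succ = weylU n ^ (m : ℕ) * weylV n)
    (i j : Fin (n + 1)) (hij : i ≠ j) (k l : ℕ)
    (hk : k < n) (hl : l < n) (hkl : ¬ (k = 0 ∧ l = 0)) :
    Matrix.trace ((A i) ^ k * (A j) ^ l) = 0 := by
  obtain ⟨P, Q, hpowi, -, hclassi⟩ := family_pow A hA0 hAm i
  obtain ⟨P', Q', hpowj, -, hclassj⟩ := family_pow A hA0 hAm j
  obtain ⟨z, hz⟩ := hpowi k
  obtain ⟨w, hw⟩ := hpowj l
  rw [hz, hw, Matrix.smul_mul, Matrix.mul_smul, weylW_mul, smul_smul, smul_smul,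
    Matrix.trace_smul, smul_eq_mul]
  suffices h : Matrix.trace (weylW n (P*k + P'*l) (Q*k + Q'*l)) = 0 by
    rw [h, mul_zero]
  apply trace_weylW
  -- now the arithmetic case analysis
  rcases hclassi with ⟨hi0, hP, hQ⟩ | ⟨m, him, hP, hQ⟩ <;>
    rcases hclassj with ⟨hj0, hP', hQ'⟩ | ⟨m', hjm, hP', hQ'⟩
  · exact absurd (hi0.trans hj0.symm) hij
  · -- i = 0, j = m'.succ : exponents (k + m'*l, l)
    subst hP hQ hP' hQ'
    by_cases hl0 : l = 0
    · subst hl0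
      have hk0 : k ≠ 0 := fun h => hkl ⟨h, rfl⟩
      exact Or.inl (by simpa using Nat.not_dvd_of_pos_of_lt (Nat.pos_of_ne_zero hk0) hk)
    · exact Or.inr (by simpa using Nat.not_dvd_of_pos_of_lt (Nat.pos_of_ne_zero hl0) hl)
  · -- i = m.succ, j = 0 : exponents (m*k + l, k)
    subst hP hQ hP' hQ'
    by_cases hk0 : k = 0
    · subst hk0
      have hl0 : l ≠ 0 := fun h => hkl ⟨rfl, h⟩
      exact Or.inl (by simpa using Nat.not_dvd_of_pos_of_lt (Nat.pos_of_ne_zero hl0) hl)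
    · exact Or.inr (by simpa using Nat.not_dvd_of_pos_of_lt (Nat.pos_of_ne_zero hk0) hk)
  · -- both successors
    subst hP hQ hP' hQ'
    have hmm' : (m : ℕ) ≠ (m' : ℕ) := by
      intro h
      apply hij
      rw [him, hjm]
      congr 1
      exact Fin.ext h
    by_cases hq : n ∣ 1*k + 1*l
    · rw [one_mul, one_mul] at hq
      -- k + l = n
      have hkln : k + l = n := by
        obtain ⟨t, ht⟩ := hq
        have hpos : 0 < k + l := by
          rcases Nat.eq_zero_or_pos (k + l) with h | h
          · exfalso; exact hkl ⟨Nat.eq_zero_of_add_eq_zero_right h,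
              Nat.eq_zero_of_add_eq_zero_left h⟩
          · exact h
        have ht1 : 0 < t := by
          by_contra h
          push_neg at h
          interval_cases t
          · simp [ht] at hpos
        have ht2 : t < 2 := by
          by_contra h
          push_neg at h
          have : n * 2 ≤ n * t := Nat.mul_le_mul_left n h
          omega
        have : t = 1 := by omega
        rw [this, mul_one] at ht
        exact ht
      refine Or.inl ?_
      intro hd
      -- n ∣ m*k + m'*l, and k + l = n, k,l < n, m ≠ m'
      have hk0 : k ≠ 0 := by omega
      have hl0 : l ≠ 0 := by omega
      have hdz : (n:ℤ) ∣ ((m':ℕ) - (m:ℕ) : ℤ) * l := by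
        have h1 : (n:ℤ) ∣ ((m:ℕ) * k + (m':ℕ) * l : ℤ) := by
          exact_mod_cast Int.natCast_dvd_natCast.mpr hd
        have h2 : (n:ℤ) ∣ ((m:ℕ) * k + (m:ℕ) * l : ℤ) := by
          have : ((m:ℕ) * k + (m:ℕ) * l : ℤ) = (m:ℕ) * (k + l : ℕ) := by push_cast; ring
          rw [this, hkln]
          exact ⟨(m:ℕ), by ring⟩
        have := dvd_sub h1 h2
        have heq : ((m:ℕ) * k + (m':ℕ) * l : ℤ) - ((m:ℕ) * k + (m:ℕ) * l : ℤ)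
            = ((m':ℕ) - (m:ℕ) : ℤ) * l := by ring
        rwa [heq] at this
      have hprime : Prime (n : ℤ) := Nat.prime_iff_prime_int.mp hn
      rcases hprime.dvd_mul.mp hdz with hc | hc
      · have : ((m':ℕ) - (m:ℕ) : ℤ) = 0 := by
          apply Int.eq_zero_of_abs_lt_dvd hc
          have h1 : ((m:ℕ) : ℤ) < n := by exact_mod_cast m.isLt
          have h2 : ((m':ℕ) : ℤ) < n := by exact_mod_cast m'.isLt
          have h3 : (0:ℤ) ≤ (m:ℕ) := by positivity
          have h4 : (0:ℤ) ≤ (m':ℕ) := by positivity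
          rw [abs_lt]
          omega
        have : (m':ℕ) = (m:ℕ) := by exact_mod_cast sub_eq_zero.mp this
        exact hmm' this.symm
      · have : (n:ℕ) ∣ l := by exact_mod_cast Int.natCast_dvd_natCast.mp hc
        have := Nat.le_of_dvd (Nat.pos_of_ne_zero hl0) this
        omega
    · exact Or.inr hq

end main

/-- For prime `n`, consider the `n + 1` matrices `A 0 = U`, `A (m+1) = U^m·V`.
Unit eigenvectors of two distinct matrices of this family satisfy
`|⟨a, b⟩|² = 1/n`: their orthonormal eigenbases are mutually unbiased. -/
theorem stmt13 {n : ℕ} (hn : n.Prime)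
    (A : Fin (n + 1) → Matrix (Fin n) (Fin n) ℂ)
    (hA0 : A 0 = weylU n)
    (hAm : ∀ m : Fin n, A m.succ = weylU n ^ (m : ℕ) * weylV n)
    (i j : Fin (n + 1)) (hij : i ≠ j)
    (a b : Fin n → ℂ) (ca cb : ℂ)
    (ha : (A i).mulVec a = ca • a) (hb : (A j).mulVec b = cb • b)
    (hna : (∑ x, (starRingEnd ℂ) (a x) * a x) = 1)
    (hnb : (∑ x, (starRingEnd ℂ) (b x) * b x) = 1) :
    ‖∑ x, (starRingEnd ℂ) (a x) * b x‖ ^ 2 = 1 / n := by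
  haveI : NeZero n := ⟨hn.pos.ne'⟩
  have hnC : (n : ℂ) ≠ 0 := Nat.cast_ne_zero.mpr hn.pos.ne'
  obtain ⟨P, Q, hpowi, huniti, -⟩ := family_pow A hA0 hAm i
  obtain ⟨P', Q', hpowj, hunitj, -⟩ := family_pow A hA0 hAm j
  have hMni : ∃ z : ℂ, (A i) ^ n = z • 1 := by
    obtain ⟨z, hz⟩ := hpowi n
    exact ⟨z, by rw [hz, weylW_eq_one (dvd_mul_left n P) (dvd_mul_left n Q)]⟩
  have hMnj : ∃ z : ℂ, (A j) ^ n = z • 1 := by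
    obtain ⟨z, hz⟩ := hpowj n
    exact ⟨z, by rw [hz, weylW_eq_one (dvd_mul_left n P') (dvd_mul_left n Q')]⟩
  have projA := proj_formula (A i) huniti (family_trace_pow_eq_zero A hA0 hAm i) hMni
    a ca ha hna
  have projB := proj_formula (A j) hunitj (family_trace_pow_eq_zero A hA0 hAm j) hMnj
    b cb hb hnb
  set ip := ∑ x, (starRingEnd ℂ) (a x) * b x with hip
  -- the trace, computed via the group-algebra expansion
  have key : Matrix.trace ((Matrix.vecMulVec a (star a)) * (Matrix.vecMulVec b (star b)))
      = (n:ℂ)⁻¹ := by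
    rw [← projA, ← projB, Matrix.smul_mul, Matrix.mul_smul, smul_smul,
      Finset.sum_mul_sum]
    have hterm : ∀ k ∈ Finset.range n, (∑ l ∈ Finset.range n,
        ((starRingEnd ℂ ca)^k • (A i)^k) * ((starRingEnd ℂ cb)^l • (A j)^l))
          = ∑ l ∈ Finset.range n,
            ((starRingEnd ℂ ca)^k * (starRingEnd ℂ cb)^l) • ((A i)^k * (A j)^l) := by
      intro k _
      refine Finset.sum_congr rfl fun l _ => ?_
      rw [Matrix.smul_mul, Matrix.mul_smul, smul_smul]
    rw [Matrix.trace_smul, Finset.sum_congr rfl hterm, Matrix.trace_sum]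
    rw [Finset.sum_congr rfl fun k _ => Matrix.trace_sum _ _]
    have hmain : (∑ k ∈ Finset.range n, ∑ l ∈ Finset.range n,
        Matrix.trace (((starRingEnd ℂ ca)^k * (starRingEnd ℂ cb)^l)
          • ((A i)^k * (A j)^l))) = (n : ℂ) := by
      rw [Finset.sum_eq_single_of_mem 0 (Finset.mem_range.mpr hn.pos)]
      · rw [Finset.sum_eq_single_of_mem 0 (Finset.mem_range.mpr hn.pos)]
        · rw [pow_zero, pow_zero, pow_zero, pow_zero, one_mul, one_smul, one_mul,
            trace_matrix_one]
        · intro l hl hl0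
          rw [Matrix.trace_smul, family_cross_trace hn A hA0 hAm i j hij 0 l hn.pos
            (Finset.mem_range.mp hl) (fun h => hl0 h.2), smul_zero]
      · intro k hk hk0
        apply Finset.sum_eq_zero
        intro l hl
        rw [Matrix.trace_smul, family_cross_trace hn A hA0 hAm i j hij k l (Finset.mem_range.mp hk)
          (Finset.mem_range.mp hl) (fun h => hk0 h.1), smul_zero]
    rw [hmain, smul_eq_mul]
    field_simp
  -- the trace, computed directly
  have lhs : (starRingEnd ℂ) ip * ip
      = Matrix.trace ((Matrix.vecMulVec a (star a)) * (Matrix.vecMulVec b (star b))) := by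
    rw [hip, map_sum, Finset.sum_mul_sum, Matrix.trace]
    simp only [Matrix.diag_apply, Matrix.mul_apply, Matrix.vecMulVec_apply, Pi.star_apply]
    refine Finset.sum_congr rfl fun x _ => Finset.sum_congr rfl fun t _ => ?_
    simp only [Complex.star_def, _root_.map_mul, Complex.conj_conj]
    ring
  have hfin : (starRingEnd ℂ) ip * ip = (n:ℂ)⁻¹ := lhs.trans key
  have habs : (Complex.normSq ip : ℂ) = (n:ℂ)⁻¹ := by
    rw [← Complex.mul_conj, mul_comm]
    exact hfin
  have habsR : Complex.normSq ip = ((n:ℝ))⁻¹ := by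
    have : ((Complex.normSq ip : ℝ) : ℂ) = (((n:ℝ))⁻¹ : ℂ) := by
      rw [habs]
      push_cast
      ring
    exact_mod_cast this
  rw [Complex.sq_norm, habsR, one_div]
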